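/- Fix ξ̄ > 0 and ξ > 0. The map b ↦ ξ̄·φ←(b) + ξ·φ←(b ξ̄/ξ) is strictly increasing on (0,∞), tends to -κ(ξ̄ + ξ) as b → 0+ and to +∞ as b → +∞; consequently, for any real numbers ū and u with u - ū < κ(ξ + ξ̄) there exists a unique b > 0 with ξ̄·φ←(b) + ξ·φ←(b ξ̄/ξ) = ū - u. (This is well-posedness without vacuum of the Riemann problem for the isentropic p-system under the no-vacuum condition.) -/

import Mathlib

open Real Set Filter Topology

/-- κ = √γ / α with α = (γ-1)/2. -/
noncomputable def kappa (γ : ℝ) : ℝ := Real.sqrt γ / ((γ - 1) / 2)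

/-- The shock branch x ↦ √((1 - x^{-1/α})(x^{γ/α} - 1)), α = (γ-1)/2. -/
noncomputable def shockPart (γ : ℝ) (x : ℝ) : ℝ :=
  Real.sqrt ((1 - x ^ (-(1 : ℝ) / ((γ - 1) / 2))) * (x ^ (γ / ((γ - 1) / 2)) - 1))

/-- Backward auxiliary function φ← : rarefaction branch κ(x-1) for x ≤ 1,
    shock branch for x ≥ 1 (they agree, with value 0, at x = 1). -/
noncomputable def phiB (γ : ℝ) (x : ℝ) : ℝ :=
  if x ≤ 1 then kappa γ * (x - 1) else shockPart γ x

/-- Forward auxiliary function φ→ : shock branch -√(...) for x ≤ 1,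
    rarefaction branch κ(x-1) for x ≥ 1 (they agree, with value 0, at x = 1). -/
noncomputable def phiF (γ : ℝ) (x : ℝ) : ℝ :=
  if x < 1 then -shockPart γ x else kappa γ * (x - 1)

section aux
variable {γ : ℝ}

lemma kappa_pos (hγ : 1 < γ) : 0 < kappa γ :=
  div_pos (Real.sqrt_pos.2 (by linarith)) (by linarith)

lemma shock_inner_pos (hγ : 1 < γ) {x : ℝ} (hx : 1 < x) :
    0 < (1 - x ^ (-(1 : ℝ) / ((γ - 1) / 2))) * (x ^ (γ / ((γ - 1) / 2)) - 1) := by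
  have hα : 0 < (γ - 1) / 2 := by linarith
  have hneg : -(1 : ℝ) / ((γ - 1) / 2) < 0 := by
    apply div_neg_of_neg_of_pos <;> [norm_num; exact hα]
  have h1 : x ^ (-(1 : ℝ) / ((γ - 1) / 2)) < 1 :=
    Real.rpow_lt_one_of_one_lt_of_neg hx hneg
  have h2 : 1 < x ^ (γ / ((γ - 1) / 2)) :=
    Real.one_lt_rpow hx (by positivity)
  nlinarith

lemma shock_pos (hγ : 1 < γ) {x : ℝ} (hx : 1 < x) : 0 < shockPart γ x :=
  Real.sqrt_pos.2 (shock_inner_pos hγ hx)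

lemma shock_one : shockPart γ 1 = 0 := by
  simp [shockPart, Real.one_rpow]

lemma shock_strictMonoOn (hγ : 1 < γ) : StrictMonoOn (shockPart γ) (Set.Ici 1) := by
  have hα : 0 < (γ - 1) / 2 := by linarith
  intro a ha b hb hab
  have ha1 : (1 : ℝ) ≤ a := ha
  have ha0 : (0 : ℝ) < a := by linarith
  have hb1 : (1 : ℝ) < b := lt_of_le_of_lt ha1 hab
  have h1 : a ^ (-(1 : ℝ) / ((γ - 1) / 2)) ≤ 1 := by
    rcases eq_or_lt_of_le ha1 with h | h
    · rw [← h, Real.one_rpow]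
    · exact le_of_lt (Real.rpow_lt_one_of_one_lt_of_neg h
        (div_neg_of_neg_of_pos (by norm_num) hα))
  have h2 : b ^ (-(1 : ℝ) / ((γ - 1) / 2)) < a ^ (-(1 : ℝ) / ((γ - 1) / 2)) :=
    Real.rpow_lt_rpow_of_neg ha0 hab (div_neg_of_neg_of_pos (by norm_num) hα)
  have h3 : (1 : ℝ) ≤ a ^ (γ / ((γ - 1) / 2)) :=
    Real.one_le_rpow ha1 (by positivity)
  have h4 : a ^ (γ / ((γ - 1) / 2)) < b ^ (γ / ((γ - 1) / 2)) :=
    Real.rpow_lt_rpow (by linarith) hab (by positivity)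
  apply Real.sqrt_lt_sqrt
  · nlinarith
  · nlinarith

lemma shock_contOn (hγ : 1 < γ) : ContinuousOn (shockPart γ) (Set.Ici 1) := by
  apply ContinuousOn.sqrt
  apply ContinuousOn.mul
  · exact (continuous_const.continuousOn).sub
      (continuousOn_id.rpow_const fun x hx => Or.inl (by
        have : (1 : ℝ) ≤ x := hx; simp only [id]; intro h; rw [h] at this; linarith))
  · exact (continuousOn_id.rpow_const fun x hx => Or.inl (by
      have : (1 : ℝ) ≤ x := hx; simp only [id]; intro h; rw [h] at this; linarith)).sub
      continuous_const.continuousOn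

lemma phiB_continuous (hγ : 1 < γ) : Continuous (phiB γ) := by
  have : Continuous fun x : ℝ => if (id x : ℝ) ≤ (1 : ℝ) then kappa γ * (x - 1) else shockPart γ x := by
    apply continuous_if_le continuous_id continuous_const
    · exact (continuous_const.mul (continuous_id.sub continuous_const)).continuousOn
    · exact (shock_contOn hγ).mono (fun x hx => by simpa using hx)
    · intro x hx
      simp only [id] at hx
      subst hx
      simp [shock_one]
  exact this

lemma phiB_strictMonoOn (hγ : 1 < γ) : StrictMonoOn (phiB γ) (Set.Ioi 0) := by
  intro a ha b hb hab
  simp only [phiB]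
  rcases le_or_gt b 1 with hb1 | hb1
  · rw [if_pos (le_of_lt (lt_of_lt_of_le hab hb1)), if_pos hb1]
    have := kappa_pos (γ := γ) hγ
    nlinarith
  · rw [if_neg (not_le.2 hb1)]
    rcases le_or_gt a 1 with ha1 | ha1
    · rw [if_pos ha1]
      have := kappa_pos (γ := γ) hγ
      have h1 : kappa γ * (a - 1) ≤ 0 := by nlinarith
      exact lt_of_le_of_lt h1 (shock_pos hγ hb1)
    · rw [if_neg (not_le.2 ha1)]
      exact shock_strictMonoOn hγ (le_of_lt ha1) (le_of_lt (lt_trans ha1 hab)) hab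

lemma phiB_tendsto_atTop (hγ : 1 < γ) : Tendsto (phiB γ) atTop atTop := by
  have hα : 0 < (γ - 1) / 2 := by linarith
  have h1 : Tendsto (fun x : ℝ => 1 - x ^ (-(1 : ℝ) / ((γ - 1) / 2))) atTop (𝓝 1) := by
    have := tendsto_rpow_neg_atTop (y := 1 / ((γ - 1) / 2)) (by positivity)
    have h := (tendsto_const_nhds (x := (1:ℝ))).sub this
    simpa [neg_div] using h
  have h2 : Tendsto (fun x : ℝ => x ^ (γ / ((γ - 1) / 2)) - 1) atTop atTop :=
    (tendsto_rpow_atTop (by positivity)).atTop_add tendsto_const_nhds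
  have h3 : Tendsto (fun x : ℝ =>
      (1 - x ^ (-(1 : ℝ) / ((γ - 1) / 2))) * (x ^ (γ / ((γ - 1) / 2)) - 1)) atTop atTop :=
    Filter.Tendsto.pos_mul_atTop (by norm_num) h1 h2
  have hsq : Tendsto Real.sqrt atTop atTop :=
    (tendsto_rpow_atTop (by norm_num : (0:ℝ) < 1/2)).congr
      (fun x => (Real.sqrt_eq_rpow x).symm)
  have h4 : Tendsto (shockPart γ) atTop atTop := hsq.comp h3
  apply h4.congr'
  filter_upwards [eventually_gt_atTop (1 : ℝ)] with x hx
  simp [phiB, not_le.2 hx]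

end aux

/-- the map b ↦ ξ̄·φ←(b) + ξ·φ←(bξ̄/ξ) is strictly increasing on (0,∞),
    tends to -κ(ξ̄+ξ) as b → 0+ and to +∞ as b → +∞; consequently, under the
    no-vacuum condition u - ū < κ(ξ + ξ̄) the Riemann problem has a unique
    backward ξ-ratio b > 0. -/
theorem riemann_problem_wellposed (γ : ℝ) (hγ : 1 < γ)
    (ξbar ξ : ℝ) (hξbar : 0 < ξbar) (hξ : 0 < ξ) :
    StrictMonoOn (fun b : ℝ => ξbar * phiB γ b + ξ * phiB γ (b * ξbar / ξ))
      (Set.Ioi (0 : ℝ)) ∧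
    Filter.Tendsto (fun b : ℝ => ξbar * phiB γ b + ξ * phiB γ (b * ξbar / ξ))
      (nhdsWithin 0 (Set.Ioi 0)) (nhds (-(kappa γ * (ξbar + ξ)))) ∧
    Filter.Tendsto (fun b : ℝ => ξbar * phiB γ b + ξ * phiB γ (b * ξbar / ξ))
      Filter.atTop Filter.atTop ∧
    ∀ ubar u : ℝ, u - ubar < kappa γ * (ξ + ξbar) →
      ∃! b : ℝ, 0 < b ∧ ξbar * phiB γ b + ξ * phiB γ (b * ξbar / ξ) = ubar - u := by
  set f : ℝ → ℝ := fun b => ξbar * phiB γ b + ξ * phiB γ (b * ξbar / ξ) with hf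
  -- strict monotonicity
  have hmono : StrictMonoOn f (Set.Ioi (0 : ℝ)) := by
    intro a ha b hb hab
    have h1 : phiB γ a < phiB γ b := phiB_strictMonoOn hγ ha hb hab
    have h2 : phiB γ (a * ξbar / ξ) < phiB γ (b * ξbar / ξ) := by
      apply phiB_strictMonoOn hγ
      · exact div_pos (mul_pos ha hξbar) hξ
      · exact div_pos (mul_pos (lt_trans ha hab) hξbar) hξ
      · gcongr
    simp only [hf]
    nlinarith
  -- limit at 0+
  have hlow : Tendsto f (nhdsWithin 0 (Set.Ioi 0)) (𝓝 (-(kappa γ * (ξbar + ξ)))) := by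
    have hL : Tendsto (fun b : ℝ => ξbar * (kappa γ * (b - 1)) + ξ * (kappa γ * (b * ξbar / ξ - 1)))
        (𝓝 (0 : ℝ)) (𝓝 (ξbar * (kappa γ * ((0:ℝ) - 1)) + ξ * (kappa γ * ((0:ℝ) * ξbar / ξ - 1)))) := by
      apply Continuous.tendsto
      continuity
    have hval : ξbar * (kappa γ * ((0:ℝ) - 1)) + ξ * (kappa γ * ((0:ℝ) * ξbar / ξ - 1))
        = -(kappa γ * (ξbar + ξ)) := by ring
    rw [hval] at hL
    have hL' := hL.mono_left (nhdsWithin_le_nhds (s := Set.Ioi (0:ℝ)))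
    apply hL'.congr'
    have hev1 : ∀ᶠ b in nhdsWithin (0:ℝ) (Set.Ioi 0), b < 1 :=
      eventually_nhdsWithin_of_eventually_nhds (eventually_lt_nhds (by norm_num))
    have hev2 : ∀ᶠ b in nhdsWithin (0:ℝ) (Set.Ioi 0), b * ξbar / ξ < 1 := by
      have hc : Tendsto (fun b : ℝ => b * ξbar / ξ) (𝓝 0) (𝓝 (0 * ξbar / ξ)) := by
        apply Continuous.tendsto; continuity
      have : (0:ℝ) * ξbar / ξ = 0 := by ring
      rw [this] at hc
      exact eventually_nhdsWithin_of_eventually_nhds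
        (hc.eventually_lt_const (by norm_num))
    filter_upwards [hev1, hev2] with b h1 h2
    simp [hf, phiB, le_of_lt h1, le_of_lt h2]
  -- limit at ∞
  have hhigh : Tendsto f atTop atTop := by
    have t1 : Tendsto (fun b : ℝ => ξbar * phiB γ b) atTop atTop :=
      (phiB_tendsto_atTop hγ).const_mul_atTop hξbar
    have t2 : Tendsto (fun b : ℝ => ξ * phiB γ (b * ξbar / ξ)) atTop atTop := by
      have harg : Tendsto (fun b : ℝ => b * ξbar / ξ) atTop atTop :=
        (tendsto_id.atTop_mul_const hξbar).atTop_div_const hξ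
      exact ((phiB_tendsto_atTop hγ).comp harg).const_mul_atTop hξ
    exact Tendsto.atTop_add_atTop t1 t2
  refine ⟨hmono, hlow, hhigh, ?_⟩
  intro ubar u huu
  have htarget : -(kappa γ * (ξbar + ξ)) < ubar - u := by
    have : kappa γ * (ξ + ξbar) = kappa γ * (ξbar + ξ) := by ring
    linarith [huu.trans_eq this]
  -- existence
  have hfcont : Continuous f := by
    apply Continuous.add
    · exact continuous_const.mul (phiB_continuous hγ)
    · exact continuous_const.mul ((phiB_continuous hγ).comp (by continuity))
  obtain ⟨a, hafa, ha0⟩ :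
      ∃ a, f a < ubar - u ∧ a ∈ Set.Ioi (0:ℝ) :=
    ((hlow.eventually_lt_const htarget).and self_mem_nhdsWithin).exists
  obtain ⟨c, hcfc, hca⟩ :
      ∃ c, ubar - u < f c ∧ a ≤ c :=
    ((hhigh.eventually_gt_atTop (ubar - u)).and (eventually_ge_atTop a)).exists
  have hivt := intermediate_value_Icc hca (hfcont.continuousOn (s := Set.Icc a c))
  have hmem : ubar - u ∈ Set.Icc (f a) (f c) := ⟨le_of_lt hafa, le_of_lt hcfc⟩
  obtain ⟨b, hbmem, hbval⟩ := hivt hmem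
  have hb0 : 0 < b := lt_of_lt_of_le ha0 hbmem.1
  refine ⟨b, ⟨hb0, hbval⟩, ?_⟩
  intro b' hb'
  obtain ⟨hb'0, hb'val⟩ := hb'
  have hfb' : f b' = ubar - u := hb'val
  exact hmono.injOn hb'0 hb0 (by rw [hfb', hbval])
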